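/- Lemma 1 (asymptotic bounds for the modified posterior FDR): Assume conditions (C) and (A1), assume d^t ≠ (0,…,0), and assume that for each i with d_i^t = 1 there is a constant K_i > 0 such that (1/n)·log(1 − w_{in}(d^t)) → −K_i as n → ∞. Let t = #{i : d_i^t = 1} and define mFDR_n = (Σ_{i=1}^m d̂_{n,i}(1 − w_{in}(d̂_n))) / max(Σ_{i=1}^m d̂_{n,i}, 1). Then for every ε > 0 there exists n₀ such that for all n ≥ n₀: e^{−nε} · (Σ_{i : d_i^t = 1} e^{−n K_i}) / t ≤ mFDR_n ≤ e^{nε} · (Σ_{i : d_i^t = 1} e^{−n K_i}) / t. -/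

import Mathlib

open Filter

/-- Lemma 1 (asymptotic bounds for the modified posterior FDR). -/
theorem mFDR_asymptotic_bounds
    (m : ℕ) (hm : 1 ≤ m)
    (dt : Fin m → Bool)
    (G : Fin m → Finset (Fin m)) (hG : ∀ i, i ∈ G i)
    (w : ℕ → Fin m → (Fin m → Bool) → ℝ)
    (hw : ∀ n i d, w n i d ∈ Set.Ioo (0:ℝ) 1)
    (β : ℕ → ℝ) (hβ : ∀ n, β n ∈ Set.Ioo (0:ℝ) 1)
    (hA1₁ : 0 < Filter.liminf β Filter.atTop)
    (hA1₂ : Filter.limsup β Filter.atTop < 1)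
    (hC1 : ∀ (i : Fin m) (d : Fin m → Bool),
      (∀ j ∈ G i, d j = dt j) → Tendsto (fun n => w n i d) atTop (nhds 1))
    (hC0 : ∀ (i : Fin m) (d : Fin m → Bool),
      (¬ ∀ j ∈ G i, d j = dt j) → Tendsto (fun n => w n i d) atTop (nhds 0))
    (hdt : (Finset.univ.filter (fun i => dt i = true)).Nonempty)
    (K : Fin m → ℝ)
    (hK : ∀ i, dt i = true → 0 < K i ∧
      Tendsto (fun n : ℕ => Real.log (1 - w n i dt) / n) atTop (nhds (-(K i))))
    (dhat : ℕ → Fin m → Bool)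
    (hdhat : ∀ n (d : Fin m → Bool),
      (∑ i, if d i then w n i d - β n else 0) ≤
        (∑ i, if dhat n i then w n i (dhat n) - β n else 0)) :
    ∀ ε > (0:ℝ), ∃ n₀ : ℕ, ∀ n ≥ n₀,
      Real.exp (-(n:ℝ) * ε) *
          (∑ i ∈ Finset.univ.filter (fun i => dt i = true), Real.exp (-(n:ℝ) * K i)) /
          ((Finset.univ.filter (fun i => dt i = true)).card : ℝ)
        ≤ (∑ i, if dhat n i then 1 - w n i (dhat n) else 0) /
            max (∑ i, if dhat n i then (1:ℝ) else 0) 1 ∧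
      (∑ i, if dhat n i then 1 - w n i (dhat n) else 0) /
            max (∑ i, if dhat n i then (1:ℝ) else 0) 1
        ≤ Real.exp ((n:ℝ) * ε) *
            (∑ i ∈ Finset.univ.filter (fun i => dt i = true), Real.exp (-(n:ℝ) * K i)) /
            ((Finset.univ.filter (fun i => dt i = true)).card : ℝ) := by
  classical
  intro ε hε
  set T := Finset.univ.filter (fun i => dt i = true) with hT
  have htpos : 0 < T.card := Finset.card_pos.2 hdt
  have htR : (0:ℝ) < (T.card : ℝ) := by exact_mod_cast htpos
  -- obtain δ bounds on β
  obtain ⟨δ, hδpos, hδev⟩ : ∃ δ > (0:ℝ), ∀ᶠ n in atTop, δ ≤ β n ∧ β n ≤ 1 - δ := by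
    set L := liminf β atTop
    set U := limsup β atTop
    have hbd1 : IsBoundedUnder (· ≥ ·) atTop β := isBoundedUnder_of ⟨0, fun n => (hβ n).1.le⟩
    have hbd2 : IsBoundedUnder (· ≤ ·) atTop β := isBoundedUnder_of ⟨1, fun n => (hβ n).2.le⟩
    have e1 : ∀ᶠ n in atTop, L/2 < β n := eventually_lt_of_lt_liminf (by linarith) hbd1
    have e2 : ∀ᶠ n in atTop, β n < (U+1)/2 := eventually_lt_of_limsup_lt (by linarith) hbd2
    refine ⟨min (L/2) ((1-U)/2), lt_min (by linarith) (by linarith), ?_⟩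
    filter_upwards [e1, e2] with n h1 h2
    constructor
    · exact le_trans (min_le_left _ _) h1.le
    · have := min_le_right (L/2) ((1-U)/2)
      linarith
  -- limit of the weight sums
  have hAtend : ∀ d : Fin m → Bool,
      Tendsto (fun n => ∑ i, if d i then w n i d else 0) atTop
        (nhds ((Finset.univ.filter (fun i => d i = true ∧ ∀ j ∈ G i, d j = dt j)).card : ℝ)) := by
    intro d
    have hcast : ((Finset.univ.filter (fun i => d i = true ∧ ∀ j ∈ G i, d j = dt j)).card : ℝ)
        = ∑ i : Fin m, (if d i = true ∧ ∀ j ∈ G i, d j = dt j then (1:ℝ) else 0) := by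
      simp [Finset.sum_boole]
    rw [hcast]
    apply tendsto_finset_sum
    intro i _
    by_cases hdi : d i = true
    · by_cases hcor : ∀ j ∈ G i, d j = dt j
      · rw [if_pos ⟨hdi, hcor⟩]
        simpa [hdi] using hC1 i d hcor
      · rw [if_neg (by tauto)]
        simpa [hdi] using hC0 i d hcor
    · rw [if_neg (by tauto)]
      simp only [hdi]
      exact tendsto_const_nhds
  -- decomposition of the objective
  have hFdecomp : ∀ (n : ℕ) (d : Fin m → Bool),
      (∑ i, if d i then w n i d - β n else 0)
        = (∑ i, if d i then w n i d else 0)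
          - ((Finset.univ.filter (fun i => d i = true)).card : ℝ) * β n := by
    intro n d
    rw [Finset.sum_congr rfl (fun i _ =>
      show (if d i then w n i d - β n else 0)
          = (if d i then w n i d else 0) - (if d i then β n else 0) by split <;> ring)]
    rw [Finset.sum_sub_distrib]
    congr 1
    rw [← Finset.sum_filter, Finset.sum_const, nsmul_eq_mul]
  -- strict optimality of dt eventually
  have hstrict : ∀ d : Fin m → Bool, d ≠ dt →
      ∀ᶠ n in atTop, (∑ i, if d i then w n i d - β n else 0)
        < (∑ i, if dt i then w n i dt - β n else 0) := by
    intro d hne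
    set S := Finset.univ.filter (fun i => d i = true ∧ ∀ j ∈ G i, d j = dt j) with hS
    set sd := Finset.univ.filter (fun i => d i = true) with hsd
    have hsub1 : S ⊆ T := by
      intro i hi
      simp only [hS, hT, Finset.mem_filter, Finset.mem_univ, true_and] at hi ⊢
      rw [← hi.2 i (hG i)]; exact hi.1
    have hsub2 : S ⊆ sd := by
      intro i hi
      simp only [hS, hsd, Finset.mem_filter, Finset.mem_univ, true_and] at hi ⊢
      exact hi.1
    have hlt : S.card < T.card ∨ S.card < sd.card := by
      by_contra h
      push_neg at h
      have e1 : S = T := Finset.eq_of_subset_of_card_le hsub1 h.1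
      have e2 : S = sd := Finset.eq_of_subset_of_card_le hsub2 h.2
      apply hne
      funext i
      have hiff : (i ∈ sd) ↔ (i ∈ T) := by rw [← e1, ← e2]
      simp only [hsd, hT, Finset.mem_filter, Finset.mem_univ, true_and] at hiff
      rcases Bool.dichotomy (dt i) with h' | h' <;> rcases Bool.dichotomy (d i) with h'' | h'' <;>
        simp_all
    have hle1 : (S.card : ℝ) ≤ T.card := by exact_mod_cast Finset.card_le_card hsub1
    have hle2 : (S.card : ℝ) ≤ sd.card := by exact_mod_cast Finset.card_le_card hsub2
    have key : ∀ b : ℝ, δ ≤ b → b ≤ 1 - δ →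
        δ ≤ ((T.card : ℝ) - S.card) - ((T.card : ℝ) - sd.card) * b := by
      intro b hb1 hb2
      rcases hlt with h | h
      · have h' : (S.card : ℝ) + 1 ≤ T.card := by exact_mod_cast h
        nlinarith [mul_nonneg (sub_nonneg.2 hle2) (le_trans hδpos.le hb1),
          mul_le_mul_of_nonneg_left (show δ ≤ 1 - b by linarith)
            (show (0:ℝ) ≤ (T.card : ℝ) - S.card by linarith)]
      · have h' : (S.card : ℝ) + 1 ≤ sd.card := by exact_mod_cast h
        nlinarith [mul_nonneg (sub_nonneg.2 hle1) (show (0:ℝ) ≤ 1 - b by linarith),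
          mul_le_mul_of_nonneg_left hb1
            (show (0:ℝ) ≤ (sd.card : ℝ) - S.card by linarith)]
    have hadt : (Finset.univ.filter (fun i => dt i = true ∧ ∀ j ∈ G i, dt j = dt j)) = T := by
      simp [hT]
    have ev1 : ∀ᶠ n in atTop, (T.card : ℝ) - δ/4 < ∑ i, if dt i then w n i dt else 0 := by
      have h0 := hAtend dt
      rw [hadt] at h0
      exact h0.eventually (eventually_gt_nhds (by linarith))
    have ev2 : ∀ᶠ n in atTop, (∑ i, if d i then w n i d else 0) < (S.card : ℝ) + δ/4 :=
      (hAtend d).eventually (eventually_lt_nhds (by linarith))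
    have hcdt : (Finset.univ.filter (fun i => dt i = true)).card = T.card := by rw [hT]
    filter_upwards [hδev, ev1, ev2] with n hb h1 h2
    rw [hFdecomp n d, hFdecomp n dt, hcdt]
    have := key (β n) hb.1 hb.2
    nlinarith
  -- eventually dhat n = dt
  have hdd : ∀ᶠ n in atTop, dhat n = dt := by
    have hall : ∀ᶠ n in atTop, ∀ d : Fin m → Bool, d ≠ dt →
        (∑ i, if d i then w n i d - β n else 0) < (∑ i, if dt i then w n i dt - β n else 0) :=
      eventually_all.2 fun d => by
        by_cases h : d = dt
        · exact Eventually.of_forall fun n h' => absurd h h'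
        · filter_upwards [hstrict d h] with n hn _ using hn
    filter_upwards [hall] with n h
    by_contra hne
    have h1 := h (dhat n) hne
    have h2 := hdhat n dt
    linarith
  -- per-coordinate exponential bounds eventually
  have hEall : ∀ᶠ n : ℕ in atTop, ∀ i, dt i = true →
      |Real.log (1 - w n i dt) / n + K i| < ε := by
    refine eventually_all.2 fun i => ?_
    by_cases hi : dt i = true
    · have h0 := (hK i hi).2
      have h1 : ∀ᶠ x in nhds (-(K i)), |x - (-(K i))| < ε := eventually_abs_sub_lt _ hε
      filter_upwards [h0.eventually h1] with n hn _
      simpa [sub_neg_eq_add] using hn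
    · exact Eventually.of_forall fun n h' => absurd h' hi
  -- combine everything
  have hmain : ∀ᶠ n : ℕ in atTop,
      Real.exp (-(n:ℝ) * ε) * (∑ i ∈ T, Real.exp (-(n:ℝ) * K i)) / (T.card : ℝ)
        ≤ (∑ i, if dhat n i then 1 - w n i (dhat n) else 0) /
            max (∑ i, if dhat n i then (1:ℝ) else 0) 1 ∧
      (∑ i, if dhat n i then 1 - w n i (dhat n) else 0) /
            max (∑ i, if dhat n i then (1:ℝ) else 0) 1
        ≤ Real.exp ((n:ℝ) * ε) * (∑ i ∈ T, Real.exp (-(n:ℝ) * K i)) / (T.card : ℝ) := by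
    filter_upwards [hdd, hEall, eventually_ge_atTop 1] with n hdn habs hn1
    have hnpos : (0:ℝ) < (n:ℝ) := by exact_mod_cast hn1
    have hbounds : ∀ i ∈ T,
        Real.exp (-(n:ℝ) * ε) * Real.exp (-(n:ℝ) * K i) ≤ 1 - w n i dt ∧
        1 - w n i dt ≤ Real.exp ((n:ℝ) * ε) * Real.exp (-(n:ℝ) * K i) := by
      intro i hi
      have hi' : dt i = true := by
        simpa [hT, Finset.mem_filter] using hi
      have hpos : 0 < 1 - w n i dt := by linarith [(hw n i dt).2]
      have hai := abs_lt.1 (habs i hi')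
      have hlogeq : Real.log (1 - w n i dt) / (n:ℝ) * (n:ℝ) = Real.log (1 - w n i dt) :=
        div_mul_cancel₀ _ (ne_of_gt hnpos)
      constructor
      · rw [← Real.exp_add, ← Real.exp_log hpos]
        apply Real.exp_le_exp.2
        have h3 : (-(K i) - ε) * (n:ℝ) ≤ Real.log (1 - w n i dt) / (n:ℝ) * (n:ℝ) :=
          mul_le_mul_of_nonneg_right (by linarith [hai.1]) hnpos.le
        rw [hlogeq] at h3
        have hid : (-(K i) - ε) * (n:ℝ) = -(n:ℝ) * ε + -(n:ℝ) * K i := by ring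
        linarith
      · rw [← Real.exp_add, ← Real.exp_log hpos]
        apply Real.exp_le_exp.2
        have h3 : Real.log (1 - w n i dt) / (n:ℝ) * (n:ℝ) ≤ (-(K i) + ε) * (n:ℝ) :=
          mul_le_mul_of_nonneg_right (by linarith [hai.2]) hnpos.le
        rw [hlogeq] at h3
        have hid : (-(K i) + ε) * (n:ℝ) = (n:ℝ) * ε + -(n:ℝ) * K i := by ring
        linarith
    have hnum : (∑ i, if dhat n i then 1 - w n i (dhat n) else 0) = ∑ i ∈ T, (1 - w n i dt) := by
      rw [hdn, hT, Finset.sum_filter]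
    have hden : (∑ i, if dhat n i then (1:ℝ) else 0) = (T.card : ℝ) := by
      rw [hdn, hT]
      simp [Finset.sum_boole]
    have hmax : max ((T.card : ℝ)) 1 = (T.card : ℝ) :=
      max_eq_left (by exact_mod_cast htpos)
    have hsum_low : Real.exp (-(n:ℝ)*ε) * (∑ i ∈ T, Real.exp (-(n:ℝ)*K i))
        ≤ ∑ i ∈ T, (1 - w n i dt) := by
      rw [Finset.mul_sum]
      exact Finset.sum_le_sum fun i hi => (hbounds i hi).1
    have hsum_up : (∑ i ∈ T, (1 - w n i dt))
        ≤ Real.exp ((n:ℝ)*ε) * (∑ i ∈ T, Real.exp (-(n:ℝ)*K i)) := by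
      rw [Finset.mul_sum]
      exact Finset.sum_le_sum fun i hi => (hbounds i hi).2
    rw [hnum, hden, hmax]
    constructor
    · exact (div_le_div_iff_of_pos_right htR).2 hsum_low
    · exact (div_le_div_iff_of_pos_right htR).2 hsum_up
  rw [eventually_atTop] at hmain
  exact hmain
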